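/- Let X and Y be nonempty compact metric spaces and let λ, μ > 0 be real numbers. Then d_GH(λ·X, μ·Y) ≤ (1/2)·|λ − μ|·diam X + μ·d_GH(X, Y). -/

import Mathlib

open Metric

/-- Type synonym for a metric space with distances scaled by `lam`. -/
def Scaled (lam : ℝ) (X : Type*) : Type _ := X

/-- The canonical map from `Scaled lam X` back to `X`. -/
def Scaled.unscale {lam : ℝ} {X : Type*} (x : Scaled lam X) : X := x

/-- The canonical map from `X` to `Scaled lam X`. -/
def Scaled.mk (lam : ℝ) {X : Type*} (x : X) : Scaled lam X := x

/-- The metric on `Scaled lam X`: the metric of `X` multiplied by `lam`. -/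
noncomputable instance Scaled.metricSpace (lam : ℝ) (X : Type*) [MetricSpace X]
    [hl : Fact (0 < lam)] : MetricSpace (Scaled lam X) where
  dist x y := lam * dist x.unscale y.unscale
  dist_self x := by simp
  dist_comm x y := by simp [dist_comm]
  dist_triangle x y z := by
    show lam * dist x.unscale z.unscale ≤
      lam * dist x.unscale y.unscale + lam * dist y.unscale z.unscale
    rw [← mul_add]
    exact mul_le_mul_of_nonneg_left (dist_triangle _ _ _) hl.out.le
  eq_of_dist_eq_zero {x y} h := by
    have h' : lam * dist x.unscale y.unscale = 0 := h
    have : dist x.unscale y.unscale = 0 := by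
      rcases mul_eq_zero.mp h' with h'' | h''
      · exact absurd h'' hl.out.ne'
      · exact h''
    exact (eq_of_dist_eq_zero this : x.unscale = y.unscale)

theorem Scaled.dist_eq {lam : ℝ} {X : Type*} [MetricSpace X] [Fact (0 < lam)]
    (x y : Scaled lam X) : dist x y = lam * dist x.unscale y.unscale := rfl

theorem Scaled.continuous_unscale {lam : ℝ} {X : Type*} [MetricSpace X] [hl : Fact (0 < lam)] :
    Continuous (Scaled.unscale : Scaled lam X → X) := by
  have hl0 := hl.out
  rw [Metric.continuous_iff]
  intro b ε hε
  refine ⟨lam * ε, by positivity, fun a ha => ?_⟩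
  rw [Scaled.dist_eq] at ha
  exact lt_of_mul_lt_mul_left (by simpa using ha) hl0.le

theorem Scaled.continuous_mk {lam : ℝ} {X : Type*} [MetricSpace X] [hl : Fact (0 < lam)] :
    Continuous (Scaled.mk lam : X → Scaled lam X) := by
  have hl0 := hl.out
  have hne : lam ≠ 0 := hl0.ne'
  rw [Metric.continuous_iff]
  intro b ε hε
  refine ⟨ε / lam, by positivity, fun a ha => ?_⟩
  rw [show dist (Scaled.mk lam a) (Scaled.mk lam b) = lam * dist a b from rfl]
  calc lam * dist a b < lam * (ε / lam) := mul_lt_mul_of_pos_left ha hl0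
    _ = ε := by field_simp

/-- The identity as a homeomorphism between `X` and `Scaled lam X`. -/
noncomputable def Scaled.homeo (lam : ℝ) (X : Type*) [MetricSpace X] [Fact (0 < lam)] :
    X ≃ₜ Scaled lam X where
  toFun := Scaled.mk lam
  invFun := Scaled.unscale
  left_inv _ := rfl
  right_inv _ := rfl
  continuous_toFun := Scaled.continuous_mk
  continuous_invFun := Scaled.continuous_unscale

instance {lam : ℝ} {X : Type*} [MetricSpace X] [Fact (0 < lam)] [CompactSpace X] :
    CompactSpace (Scaled lam X) :=
  (Scaled.homeo lam X).compactSpace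

instance {lam : ℝ} {X : Type*} [Nonempty X] : Nonempty (Scaled lam X) := ‹Nonempty X›

section aux
open GromovHausdorff Metric Set

lemma ghDist_scaled_same {X : Type} [MetricSpace X] [CompactSpace X] [Nonempty X]
    (lam mu : ℝ) [hl : Fact (0 < lam)] [hm : Fact (0 < mu)] :
    ghDist (Scaled lam X) (Scaled mu X) ≤
      1 / 2 * |lam - mu| * Metric.diam (Set.univ : Set X) := by
  set ε₂ := |lam - mu| * Metric.diam (Set.univ : Set X) with hε₂
  have key : ghDist (Scaled lam X) (Scaled mu X) ≤ 0 + ε₂ / 2 + 0 := by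
    apply ghDist_le_of_approx_subsets
      (s := (Set.univ : Set (Scaled lam X)))
      (fun x => Scaled.mk mu (x.1.unscale))
    · intro x; exact ⟨x, Set.mem_univ x, by simp⟩
    · intro y
      exact ⟨⟨Scaled.mk lam y.unscale, Set.mem_univ _⟩, le_of_eq (dist_self y)⟩
    · intro x y
      show |lam * dist (x:Scaled lam X).unscale (y:Scaled lam X).unscale -
        mu * dist (x:Scaled lam X).unscale (y:Scaled lam X).unscale| ≤ ε₂
      have hd : dist (Scaled.unscale (x:Scaled lam X)) (Scaled.unscale (y:Scaled lam X)) ≤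
          Metric.diam (Set.univ : Set X) :=
        dist_le_diam_of_mem isCompact_univ.isBounded (Set.mem_univ _) (Set.mem_univ _)
      have : (Scaled.mk mu (Scaled.unscale (x:Scaled lam X))).unscale = Scaled.unscale (x:Scaled lam X) := rfl
      calc |lam * dist (Scaled.unscale (x:Scaled lam X)) (Scaled.unscale (y:Scaled lam X)) -
            mu * dist (Scaled.unscale (x:Scaled lam X)) (Scaled.unscale (y:Scaled lam X))|
          = |lam - mu| * dist (Scaled.unscale (x:Scaled lam X)) (Scaled.unscale (y:Scaled lam X)) := by
            rw [← sub_mul, abs_mul, abs_of_nonneg dist_nonneg]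
        _ ≤ ε₂ := by
            rw [hε₂]
            exact mul_le_mul_of_nonneg_left hd (abs_nonneg _)
  calc ghDist (Scaled lam X) (Scaled mu X) ≤ 0 + ε₂ / 2 + 0 := key
    _ = 1 / 2 * |lam - mu| * Metric.diam (Set.univ : Set X) := by rw [hε₂]; ring

lemma ghDist_scaled_scaled {X Y : Type} [MetricSpace X] [CompactSpace X] [Nonempty X]
    [MetricSpace Y] [CompactSpace Y] [Nonempty Y]
    (mu : ℝ) [hm : Fact (0 < mu)] :
    ghDist (Scaled mu X) (Scaled mu Y) ≤ mu * ghDist X Y := by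
  set Z := OptimalGHCoupling X Y
  set f : X → Z := optimalGHInjl X Y
  set g : Y → Z := optimalGHInjr X Y
  have hf : Isometry f := isometry_optimalGHInjl X Y
  have hg : Isometry g := isometry_optimalGHInjr X Y
  let F : Scaled mu X → Scaled mu Z := fun x => Scaled.mk mu (f x.unscale)
  let G : Scaled mu Y → Scaled mu Z := fun y => Scaled.mk mu (g y.unscale)
  have hF : Isometry F := Isometry.of_dist_eq fun a b => by
    simp only [F, Scaled.dist_eq]
    rw [show (Scaled.mk mu (f a.unscale)).unscale = f a.unscale from rfl,
      show (Scaled.mk mu (f b.unscale)).unscale = f b.unscale from rfl, hf.dist_eq]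
  have hG : Isometry G := Isometry.of_dist_eq fun a b => by
    simp only [G, Scaled.dist_eq]
    rw [show (Scaled.mk mu (g a.unscale)).unscale = g a.unscale from rfl,
      show (Scaled.mk mu (g b.unscale)).unscale = g b.unscale from rfl, hg.dist_eq]
  have hfin : EMetric.hausdorffEdist (Set.range f) (Set.range g) ≠ ⊤ :=
    hausdorffEdist_ne_top_of_nonempty_of_bounded (Set.range_nonempty f) (Set.range_nonempty g)
      (isCompact_range hf.continuous).isBounded (isCompact_range hg.continuous).isBounded
  have hgh : ghDist X Y = hausdorffDist (Set.range f) (Set.range g) :=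
    (hausdorffDist_optimal).symm
  have hghnn : 0 ≤ ghDist X Y := by
    rw [hgh]; exact hausdorffDist_nonneg
  refine le_trans (ghDist_le_hausdorffDist hF hG) ?_
  apply hausdorffDist_le_of_mem_dist (mul_nonneg hm.out.le hghnn)
  · rintro _ ⟨a, rfl⟩
    have h1 : infDist (f a.unscale) (Set.range g) ≤ ghDist X Y := by
      rw [hgh]
      exact infDist_le_hausdorffDist_of_mem (Set.mem_range_self _) hfin
    obtain ⟨z, hz, hzd⟩ := (isCompact_range hg.continuous).exists_infDist_eq_dist
      (Set.range_nonempty g) (f a.unscale)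
    obtain ⟨b, rfl⟩ := hz
    refine ⟨G (Scaled.mk mu b), ⟨Scaled.mk mu b, rfl⟩, ?_⟩
    have : dist (F a) (G (Scaled.mk mu b)) = mu * dist (f a.unscale) (g b) := rfl
    rw [this]
    exact mul_le_mul_of_nonneg_left (by rw [← hzd]; exact h1) hm.out.le
  · rintro _ ⟨b, rfl⟩
    have h1 : infDist (g b.unscale) (Set.range f) ≤ ghDist X Y := by
      rw [hgh]
      rw [hausdorffDist_comm]
      exact infDist_le_hausdorffDist_of_mem (Set.mem_range_self _)
        (by rw [EMetric.hausdorffEdist_comm]; exact hfin)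
    obtain ⟨z, hz, hzd⟩ := (isCompact_range hf.continuous).exists_infDist_eq_dist
      (Set.range_nonempty f) (g b.unscale)
    obtain ⟨a, rfl⟩ := hz
    refine ⟨F (Scaled.mk mu a), ⟨Scaled.mk mu a, rfl⟩, ?_⟩
    have : dist (F (Scaled.mk mu a)) (G b) = mu * dist (f a) (g b.unscale) := rfl
    rw [dist_comm (G b), this, dist_comm (f a)]
    exact mul_le_mul_of_nonneg_left (by rw [← hzd]; exact h1) hm.out.le

end aux

/-- For nonempty compact metric spaces `X`, `Y` and reals `λ, μ > 0`,
`d_GH(λ·X, μ·Y) ≤ (1/2)·|λ − μ|·diam X + μ·d_GH(X, Y)`. -/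
theorem ghDist_scaled_le {X : Type} {Y : Type}
    [MetricSpace X] [CompactSpace X] [Nonempty X]
    [MetricSpace Y] [CompactSpace Y] [Nonempty Y]
    (lam mu : ℝ) [Fact (0 < lam)] [Fact (0 < mu)] :
    GromovHausdorff.ghDist (Scaled lam X) (Scaled mu Y) ≤
      1 / 2 * |lam - mu| * Metric.diam (Set.univ : Set X) +
        mu * GromovHausdorff.ghDist X Y := by
  calc GromovHausdorff.ghDist (Scaled lam X) (Scaled mu Y)
      ≤ GromovHausdorff.ghDist (Scaled lam X) (Scaled mu X)
        + GromovHausdorff.ghDist (Scaled mu X) (Scaled mu Y) := by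
        simp only [GromovHausdorff.ghDist]
        exact dist_triangle _ _ _
    _ ≤ 1 / 2 * |lam - mu| * Metric.diam (Set.univ : Set X)
        + mu * GromovHausdorff.ghDist X Y :=
        add_le_add (ghDist_scaled_same lam mu) (ghDist_scaled_scaled mu)
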